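/- arXiv:2203.09995 — 2 statements merged into one kernel-verified Lean document; each statement's English description precedes it below -/
import Mathlib

section
/- Let G be a symmetric real 2×2 matrix with entries g11, g12 = g21, g22 and determinant g := g11·g22 − g12² > 0, let γ1 > 0, and let p = (p1,p2), λ = (λ1,λ2) ∈ ℝ². Define a1 = −g11²/γ1 − g12²/γ1 − g, a2 = b1 = −(g11·g12 + g12·g22)/γ1, a3 = λ1·g11 + λ2·g12 − √g·p1, b2 = −g12²/γ1 − g22²/γ1 − g, b3 = λ1·g12 + λ2·g22 − √g·p2, and X = (a2·b3 − a3·b2)/(a1·b2 − a2·b1), Y = (a1·b3 − a3·b1)/(a2·b1 − a1·b2). Set μ1* = λ1 − (g11/γ1)·X − (g12/γ1)·Y, μ2* = λ2 − (g12/γ1)·X − (g22/γ1)·Y, q1* = p1 + √g·X, q2* = p2 + √g·Y. Then (q*,μ*) satisfies the constraints g11·μ1* + g12·μ2* = √g·q1* and g12·μ1* + g22·μ2* = √g·q2*, and for every (q,μ) ∈ ℝ²×ℝ² satisfying g11·μ1 + g12·μ2 = √g·q1 and g12·μ1 + g22·μ2 = √g·q2 one has (q1*−p1)² + (q2*−p2)²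 + γ1·((μ1*−λ1)² + (μ2*−λ2)²) ≤ (q1−p1)² + (q2−p2)² + γ1·((μ1−λ1)² + (μ2−λ2)²), with equality only if (q,μ) = (q*,μ*). -/
set_option maxHeartbeats 1000000 in
/-- Theorem 3.1 (thm.frac2) of "Elastica Models for Color Image Regularization",
for a single channel: the closed-form solution of the projection subproblem
`min |q−p|² + γ1·|μ−λ|²` subject to the constraint `√g·q = μ·G`, where `G` is a
symmetric 2×2 matrix with entries `g11, g12 = g21, g22` and determinant
`g = g11·g22 − g12² > 0`.  Here `lam1, lam2` play the role of `λ1, λ2`,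
`μ1s, μ2s, q1s, q2s` are `μ1*, μ2*, q1*, q2*`. -/
theorem projection_closed_form
    (g11 g12 g22 γ1 g : ℝ) (hγ1 : 0 < γ1)
    (hg : g = g11 * g22 - g12 ^ 2) (hgpos : 0 < g)
    (p1 p2 lam1 lam2 : ℝ)
    (a1 a2 a3 b1 b2 b3 X Y μ1s μ2s q1s q2s : ℝ)
    (ha1 : a1 = -g11 ^ 2 / γ1 - g12 ^ 2 / γ1 - g)
    (ha2 : a2 = -(g11 * g12 + g12 * g22) / γ1)
    (ha3 : a3 = lam1 * g11 + lam2 * g12 - Real.sqrt g * p1)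
    (hb1 : b1 = -(g11 * g12 + g12 * g22) / γ1)
    (hb2 : b2 = -g12 ^ 2 / γ1 - g22 ^ 2 / γ1 - g)
    (hb3 : b3 = lam1 * g12 + lam2 * g22 - Real.sqrt g * p2)
    (hX : X = (a2 * b3 - a3 * b2) / (a1 * b2 - a2 * b1))
    (hY : Y = (a1 * b3 - a3 * b1) / (a2 * b1 - a1 * b2))
    (hμ1s : μ1s = lam1 - (g11 / γ1) * X - (g12 / γ1) * Y)
    (hμ2s : μ2s = lam2 - (g12 / γ1) * X - (g22 / γ1) * Y)
    (hq1s : q1s = p1 + Real.sqrt g * X)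
    (hq2s : q2s = p2 + Real.sqrt g * Y) :
    (g11 * μ1s + g12 * μ2s = Real.sqrt g * q1s) ∧
    (g12 * μ1s + g22 * μ2s = Real.sqrt g * q2s) ∧
    ∀ q1 q2 μ1 μ2 : ℝ,
      g11 * μ1 + g12 * μ2 = Real.sqrt g * q1 →
      g12 * μ1 + g22 * μ2 = Real.sqrt g * q2 →
      ((q1s - p1) ^ 2 + (q2s - p2) ^ 2 +
          γ1 * ((μ1s - lam1) ^ 2 + (μ2s - lam2) ^ 2) ≤
        (q1 - p1) ^ 2 + (q2 - p2) ^ 2 +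
          γ1 * ((μ1 - lam1) ^ 2 + (μ2 - lam2) ^ 2)) ∧
      ((q1 - p1) ^ 2 + (q2 - p2) ^ 2 +
          γ1 * ((μ1 - lam1) ^ 2 + (μ2 - lam2) ^ 2) =
        (q1s - p1) ^ 2 + (q2s - p2) ^ 2 +
          γ1 * ((μ1s - lam1) ^ 2 + (μ2s - lam2) ^ 2) →
        q1 = q1s ∧ q2 = q2s ∧ μ1 = μ1s ∧ μ2 = μ2s) := by
  set s := Real.sqrt g with hsdef
  have hs : s ^ 2 = g := Real.sq_sqrt hgpos.le
  have hγ1' : γ1 ≠ 0 := ne_of_gt hγ1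
  have hD : a1 * b2 - a2 * b1 ≠ 0 := by
    have hcalc : γ1 ^ 2 * (a1 * b2 - a2 * b1) =
        g ^ 2 + γ1 * g * (g11 ^ 2 + 2 * g12 ^ 2 + g22 ^ 2) + γ1 ^ 2 * g ^ 2 := by
      rw [ha1, ha2, hb1, hb2, hg]
      field_simp
      ring
    have hpos : 0 < γ1 ^ 2 * (a1 * b2 - a2 * b1) := by
      rw [hcalc]
      nlinarith [pow_pos hgpos 2, mul_pos (pow_pos hγ1 2) (pow_pos hgpos 2),
        mul_nonneg (mul_pos hγ1 hgpos).le
          (by positivity : (0:ℝ) ≤ g11 ^ 2 + 2 * g12 ^ 2 + g22 ^ 2)]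
    intro h
    rw [h, mul_zero] at hpos
    exact lt_irrefl 0 hpos
  have hD' : a2 * b1 - a1 * b2 ≠ 0 := fun h => hD (by linarith)
  have hXY1 : a1 * X + a2 * Y + a3 = 0 := by
    rw [hX, hY]
    field_simp
    ring
  have hXY2 : b1 * X + b2 * Y + b3 = 0 := by
    rw [hX, hY, show a2 * b1 - a1 * b2 = -(a1 * b2 - a2 * b1) by ring, div_neg]
    rw [div_eq_mul_inv, div_eq_mul_inv]
    linear_combination (-b3) * mul_inv_cancel₀ hD
  have h1 := hXY1
  rw [ha1, ha2, ha3] at h1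
  have h2 := hXY2
  rw [hb1, hb2, hb3] at h2
  have hc1s : g11 * μ1s + g12 * μ2s = s * q1s := by
    rw [hμ1s, hμ2s, hq1s]
    linear_combination h1 - X * hs
  have hc2s : g12 * μ1s + g22 * μ2s = s * q2s := by
    rw [hμ1s, hμ2s, hq2s]
    linear_combination h2 - Y * hs
  refine ⟨hc1s, hc2s, ?_⟩
  intro q1 q2 μ1 μ2 hc1 hc2
  have hkey : (q1 - p1) ^ 2 + (q2 - p2) ^ 2 + γ1 * ((μ1 - lam1) ^ 2 + (μ2 - lam2) ^ 2)
      = (q1s - p1) ^ 2 + (q2s - p2) ^ 2 + γ1 * ((μ1s - lam1) ^ 2 + (μ2s - lam2) ^ 2)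
        + ((q1 - q1s) ^ 2 + (q2 - q2s) ^ 2
          + γ1 * ((μ1 - μ1s) ^ 2 + (μ2 - μ2s) ^ 2)) := by
    have e1 := hc1s
    have e2 := hc2s
    rw [hμ1s, hμ2s, hq1s] at e1
    rw [hμ1s, hμ2s, hq2s] at e2
    rw [hμ1s, hμ2s, hq1s, hq2s]
    linear_combination (norm := (field_simp; ring1))
      2 * X * e1 - 2 * X * hc1 + 2 * Y * e2 - 2 * Y * hc2
  clear hX hY h1 h2 hXY1 hXY2 ha1 ha2 ha3 hb1 hb2 hb3 hD hD' hc1 hc2 hc1s hc2s hs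
  have hmul : 0 ≤ γ1 * ((μ1 - μ1s) ^ 2 + (μ2 - μ2s) ^ 2) :=
    mul_nonneg hγ1.le (by positivity)
  have sq0 : ∀ x : ℝ, x ^ 2 = 0 → x = 0 := fun x hx =>
    pow_eq_zero_iff two_ne_zero |>.mp hx
  constructor
  · linarith [hkey, sq_nonneg (q1 - q1s), sq_nonneg (q2 - q2s), hmul]
  · intro heq
    have h0 : (q1 - q1s) ^ 2 + (q2 - q2s) ^ 2 + γ1 * ((μ1 - μ1s) ^ 2 + (μ2 - μ2s) ^ 2) = 0 := by
      linarith [hkey, heq]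
    have hq10 : (q1 - q1s) ^ 2 = 0 :=
      le_antisymm (by linarith [sq_nonneg (q2 - q2s), hmul]) (sq_nonneg _)
    have hq20 : (q2 - q2s) ^ 2 = 0 :=
      le_antisymm (by linarith [sq_nonneg (q1 - q1s), hmul]) (sq_nonneg _)
    have hsum : γ1 * ((μ1 - μ1s) ^ 2 + (μ2 - μ2s) ^ 2) = 0 := by linarith
    have hsum' : (μ1 - μ1s) ^ 2 + (μ2 - μ2s) ^ 2 = 0 :=
      (mul_eq_zero.mp hsum).resolve_left hγ1'
    have hμ10 : (μ1 - μ1s) ^ 2 = 0 :=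
      le_antisymm (by linarith [sq_nonneg (μ2 - μ2s)]) (sq_nonneg _)
    have hμ20 : (μ2 - μ2s) ^ 2 = 0 :=
      le_antisymm (by linarith [sq_nonneg (μ1 - μ1s)]) (sq_nonneg _)
    exact ⟨sub_eq_zero.mp (sq0 _ hq10), sub_eq_zero.mp (sq0 _ hq20),
      sub_eq_zero.mp (sq0 _ hμ10), sub_eq_zero.mp (sq0 _ hμ20)⟩
end

section
/- Let G be a symmetric real 2×2 matrix with entries g11, g12, g22, let g := g11·g22 − g12², and let α, γ1 ∈ ℝ with γ1 > 0 and g − α² > 0. Let p = (p1,p2), λ = (λ1,λ2) ∈ ℝ². Define a1 = −g22² − g12² − (g−α²)/γ1, a2 = b1 = g12·g22 + g11·g12, a3 = g22·p1 − g12·p2 − √(g−α²)·λ1, b2 = −g11² − g12² − (g−α²)/γ1, b3 = g11·p2 − g12·p1 − √(g−α²)·λ2, and X = (a2·b3 − a3·b2)/(a1·b2 − a2·b1), Y = (a1·b3 − a3·b1)/(a2·b1 − a1·b2). Set q1* = p1 − g22·X + g12·Y, q2* = p2 + g12·X − g11·Y, ν1* = λ1 + (√(g−α²)/γ1)·X,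 ν2* = λ2 + (√(g−α²)/γ1)·Y. Then (q*,ν*) satisfies the constraints √(g−α²)·ν1* = g22·q1* − g12·q2* and √(g−α²)·ν2* = g11·q2* − g12·q1*, and for every (q,ν) ∈ ℝ²×ℝ² satisfying √(g−α²)·ν1 = g22·q1 − g12·q2 and √(g−α²)·ν2 = g11·q2 − g12·q1 one has (q1*−p1)² + (q2*−p2)² + γ1·((ν1*−λ1)² + (ν2*−λ2)²) ≤ (q1−p1)² + (q2−p2)² + γ1·((ν1−λ1)² + (ν2−λ2)²), with equality only if (q,ν) = (q*,ν*). -/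
/-- Theorem 3.2 (thm.frac2.2) of "Elastica Models for Color Image
Regularization", for a single channel: the closed-form solution of the
projection subproblem `min |q−p|² + γ1·|ν−λ|²` subject to the constraint
`√(g−α²)·ν = q·cof(G)`, where `G` is symmetric with entries `g11, g12, g22`,
`g = g11·g22 − g12²`, and `cof(G) = [[g22,−g12],[−g12,g11]]`.
Here `lam1, lam2` play the role of `λ1, λ2`, and `ν1s, ν2s, q1s, q2s`
are `ν1*, ν2*, q1*, q2*`. -/
theorem projection_closed_form_cofactor
    (g11 g12 g22 α γ1 g : ℝ) (hγ1 : 0 < γ1)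
    (hg : g = g11 * g22 - g12 ^ 2) (hgα : 0 < g - α ^ 2)
    (p1 p2 lam1 lam2 : ℝ)
    (a1 a2 a3 b1 b2 b3 X Y ν1s ν2s q1s q2s : ℝ)
    (ha1 : a1 = -g22 ^ 2 - g12 ^ 2 - (g - α ^ 2) / γ1)
    (ha2 : a2 = g12 * g22 + g11 * g12)
    (ha3 : a3 = g22 * p1 - g12 * p2 - Real.sqrt (g - α ^ 2) * lam1)
    (hb1 : b1 = g12 * g22 + g11 * g12)
    (hb2 : b2 = -g11 ^ 2 - g12 ^ 2 - (g - α ^ 2) / γ1)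
    (hb3 : b3 = g11 * p2 - g12 * p1 - Real.sqrt (g - α ^ 2) * lam2)
    (hX : X = (a2 * b3 - a3 * b2) / (a1 * b2 - a2 * b1))
    (hY : Y = (a1 * b3 - a3 * b1) / (a2 * b1 - a1 * b2))
    (hq1s : q1s = p1 - g22 * X + g12 * Y)
    (hq2s : q2s = p2 + g12 * X - g11 * Y)
    (hν1s : ν1s = lam1 + (Real.sqrt (g - α ^ 2) / γ1) * X)
    (hν2s : ν2s = lam2 + (Real.sqrt (g - α ^ 2) / γ1) * Y) :
    (Real.sqrt (g - α ^ 2) * ν1s = g22 * q1s - g12 * q2s) ∧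
    (Real.sqrt (g - α ^ 2) * ν2s = g11 * q2s - g12 * q1s) ∧
    ∀ q1 q2 ν1 ν2 : ℝ,
      Real.sqrt (g - α ^ 2) * ν1 = g22 * q1 - g12 * q2 →
      Real.sqrt (g - α ^ 2) * ν2 = g11 * q2 - g12 * q1 →
      ((q1s - p1) ^ 2 + (q2s - p2) ^ 2 +
          γ1 * ((ν1s - lam1) ^ 2 + (ν2s - lam2) ^ 2) ≤
        (q1 - p1) ^ 2 + (q2 - p2) ^ 2 +
          γ1 * ((ν1 - lam1) ^ 2 + (ν2 - lam2) ^ 2)) ∧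
      ((q1 - p1) ^ 2 + (q2 - p2) ^ 2 +
          γ1 * ((ν1 - lam1) ^ 2 + (ν2 - lam2) ^ 2) =
        (q1s - p1) ^ 2 + (q2s - p2) ^ 2 +
          γ1 * ((ν1s - lam1) ^ 2 + (ν2s - lam2) ^ 2) →
        q1 = q1s ∧ q2 = q2s ∧ ν1 = ν1s ∧ ν2 = ν2s) := by

  have hγ0 : γ1 ≠ 0 := ne_of_gt hγ1
  set s := Real.sqrt (g - α ^ 2) with hs_def
  have hs2 : s ^ 2 = g - α ^ 2 := Real.sq_sqrt (le_of_lt hgα)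
  have hc : 0 < (g - α ^ 2) / γ1 := div_pos hgα hγ1
  -- determinant positivity
  have hDpos : 0 < a1 * b2 - a2 * b1 := by
    rw [ha1, ha2, hb1, hb2]
    nlinarith [sq_nonneg (g11 * g22 - g12 ^ 2), sq_nonneg g11, sq_nonneg g22,
      sq_nonneg g12, mul_pos hc hc, hc, sq_nonneg (g11 + g22)]
  have hD : a1 * b2 - a2 * b1 ≠ 0 := ne_of_gt hDpos
  have hD' : a2 * b1 - a1 * b2 ≠ 0 := by
    intro h; apply hD; linarith
  -- X, Y solve the linear system
  have hE1 : a1 * X + a2 * Y + a3 = 0 := by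
    rw [hX, hY]
    field_simp
    ring
  have hE2 : b1 * X + b2 * Y + b3 = 0 := by
    rw [hX, hY]
    rw [show a2 * b1 - a1 * b2 = -(a1 * b2 - a2 * b1) by ring, div_neg]
    rw [mul_div_assoc', mul_neg, mul_div_assoc', ← sub_eq_add_neg, div_sub_div_same,
      div_add' _ _ _ hD, div_eq_zero_iff]
    left
    ring
  -- relations for starred point
  have hm1 : γ1 * (ν1s - lam1) = s * X := by
    rw [hν1s]; field_simp; ring
  have hm2 : γ1 * (ν2s - lam2) = s * Y := by
    rw [hν2s]; field_simp; ring
  -- constraints for starred point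
  have hcon1 : s * ν1s = g22 * q1s - g12 * q2s := by
    rw [hν1s, hq1s, hq2s]
    have hE1' : (-g22 ^ 2 - g12 ^ 2 - (g - α ^ 2) / γ1) * X
        + (g12 * g22 + g11 * g12) * Y
        + (g22 * p1 - g12 * p2 - s * lam1) = 0 := by
      rw [← ha1, ← ha2, ← ha3]; exact hE1
    linear_combination (-1 : ℝ) * hE1' + (X / γ1) * hs2
  have hcon2 : s * ν2s = g11 * q2s - g12 * q1s := by
    rw [hν2s, hq1s, hq2s]
    have hE2' : (g12 * g22 + g11 * g12) * X
        + (-g11 ^ 2 - g12 ^ 2 - (g - α ^ 2) / γ1) * Y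
        + (g11 * p2 - g12 * p1 - s * lam2) = 0 := by
      rw [← hb1, ← hb2, ← hb3]; exact hE2
    linear_combination (-1 : ℝ) * hE2' + (Y / γ1) * hs2
  refine ⟨hcon1, hcon2, ?_⟩
  intro q1 q2 ν1 ν2 hc1 hc2
  have hd1 : s * (ν1 - ν1s) = g22 * (q1 - q1s) - g12 * (q2 - q2s) := by
    linear_combination hc1 - hcon1
  have hd2 : s * (ν2 - ν2s) = g11 * (q2 - q2s) - g12 * (q1 - q1s) := by
    linear_combination hc2 - hcon2
  -- key expansion identity
  have key : (q1 - p1) ^ 2 + (q2 - p2) ^ 2 +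
      γ1 * ((ν1 - lam1) ^ 2 + (ν2 - lam2) ^ 2) =
      (q1s - p1) ^ 2 + (q2s - p2) ^ 2 +
      γ1 * ((ν1s - lam1) ^ 2 + (ν2s - lam2) ^ 2) +
      ((q1 - q1s) ^ 2 + (q2 - q2s) ^ 2 +
        γ1 * ((ν1 - ν1s) ^ 2 + (ν2 - ν2s) ^ 2)) := by
    have hp1 : q1s - p1 = -(g22 * X) + g12 * Y := by rw [hq1s]; ring
    have hp2 : q2s - p2 = g12 * X - g11 * Y := by rw [hq2s]; ring
    linear_combination (2 * (ν1 - ν1s)) * hm1 + (2 * (ν2 - ν2s)) * hm2 +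
      (2 * X) * hd1 + (2 * Y) * hd2 +
      (2 * (q1 - q1s)) * hp1 + (2 * (q2 - q2s)) * hp2
  have hγe1 : 0 ≤ γ1 * (ν1 - ν1s) ^ 2 := mul_nonneg hγ1.le (sq_nonneg _)
  have hγe2 : 0 ≤ γ1 * (ν2 - ν2s) ^ 2 := mul_nonneg hγ1.le (sq_nonneg _)
  have hsplit : γ1 * ((ν1 - ν1s) ^ 2 + (ν2 - ν2s) ^ 2)
      = γ1 * (ν1 - ν1s) ^ 2 + γ1 * (ν2 - ν2s) ^ 2 := by ring
  constructor
  · linarith [sq_nonneg (q1 - q1s), sq_nonneg (q2 - q2s)]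
  · intro heq
    have hz : (q1 - q1s) ^ 2 + (q2 - q2s) ^ 2 +
        (γ1 * (ν1 - ν1s) ^ 2 + γ1 * (ν2 - ν2s) ^ 2) = 0 := by linarith
    have h1 : (q1 - q1s) ^ 2 = 0 := by
      have := sq_nonneg (q2 - q2s); have := sq_nonneg (q1 - q1s); linarith
    have h2 : (q2 - q2s) ^ 2 = 0 := by
      have := sq_nonneg (q2 - q2s); have := sq_nonneg (q1 - q1s); linarith
    have h3' : γ1 * (ν1 - ν1s) ^ 2 = 0 := by
      have := sq_nonneg (q2 - q2s); have := sq_nonneg (q1 - q1s); linarith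
    have h4' : γ1 * (ν2 - ν2s) ^ 2 = 0 := by
      have := sq_nonneg (q2 - q2s); have := sq_nonneg (q1 - q1s); linarith
    have h3 : (ν1 - ν1s) ^ 2 = 0 := by
      rcases mul_eq_zero.mp h3' with h | h
      · exact absurd h hγ0
      · exact h
    have h4 : (ν2 - ν2s) ^ 2 = 0 := by
      rcases mul_eq_zero.mp h4' with h | h
      · exact absurd h hγ0
      · exact h
    have e1 := sub_eq_zero.mp (pow_eq_zero_iff two_ne_zero |>.mp h1)
    have e2 := sub_eq_zero.mp (pow_eq_zero_iff two_ne_zero |>.mp h2)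
    have e3 := sub_eq_zero.mp (pow_eq_zero_iff two_ne_zero |>.mp h3)
    have e4 := sub_eq_zero.mp (pow_eq_zero_iff two_ne_zero |>.mp h4)
    exact ⟨e1, e2, e3, e4⟩
end
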